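/- Let G be a non-complete double-critical k-chromatic graph and let xy be an edge of G such that A(xy) = N(x) \ N[y] is non-empty. Then the subgraph of G induced by A(xy) has minimum degree at least 1, i.e. every vertex of A(xy) is adjacent to another vertex of A(xy). -/

import Mathlib

open SimpleGraph

/-- A graph is vertex-critical if deleting any vertex decreases the chromatic number. -/
def VertexCritical {V : Type} (G : SimpleGraph V) : Prop :=
  ∀ v : V, (G.induce ({v}ᶜ : Set V)).chromaticNumber < G.chromaticNumber

/-- A vertex-critical graph is double-critical if deleting the two end-vertices of any
edge decreases the chromatic number by at least two. -/
def DoubleCritical {V : Type} (G : SimpleGraph V) : Prop :=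
  VertexCritical G ∧
  ∀ x y : V, G.Adj x y →
    (G.induce ({x, y}ᶜ : Set V)).chromaticNumber + 2 ≤ G.chromaticNumber


/-- Let `G` be a non-complete double-critical `k`-chromatic graph and `xy` an edge of `G`
such that `A(xy) = N(x) \ N[y]` is non-empty. Then every vertex of `A(xy)` is adjacent
to another vertex of `A(xy)`, i.e. `G[A(xy)]` has minimum degree at least `1`. -/
theorem stmt6 {V : Type} [Fintype V] (G : SimpleGraph V) (k : ℕ)
    (hnc : G ≠ ⊤) (hdc : DoubleCritical G) (hchrom : G.chromaticNumber = k)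
    (x y : V) (hxy : G.Adj x y)
    (hA : (G.neighborSet x \ (G.neighborSet y ∪ {y})).Nonempty) :
    ∀ a ∈ G.neighborSet x \ (G.neighborSet y ∪ {y}),
      ∃ b ∈ G.neighborSet x \ (G.neighborSet y ∪ {y}), b ≠ a ∧ G.Adj a b := by
  classical
  intro a ha
  by_contra hcon
  push_neg at hcon
  have hxa : G.Adj x a := ha.1
  have hay : ¬ G.Adj y a := fun h => ha.2 (Or.inl h)
  have hane_y : a ≠ y := fun h => ha.2 (Or.inr (by simp [h]))
  -- `a` has no neighbour in A(xy)
  have hiso : ∀ b, G.Adj x b → ¬ G.Adj y b → b ≠ y → ¬ G.Adj a b := by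
    intro b hxb hyb hby hab
    refine hcon b ⟨hxb, ?_⟩ hab.ne' hab
    rintro (h | h)
    · exact hyb h
    · exact hby h
  have hxy' : x ≠ y := hxy.ne
  have hxa' : x ≠ a := hxa.ne
  obtain ⟨hvc, hdc2⟩ := hdc
  have h2 := hdc2 x a hxa
  rw [hchrom] at h2
  have hk2 : 2 ≤ k := by
    have h22 : (2 : ℕ∞) ≤ (k : ℕ∞) := le_trans (by simp) h2
    exact_mod_cast h22
  obtain ⟨j, rfl⟩ : ∃ j, k = j + 2 := ⟨k - 2, by omega⟩
  set s : Set V := ({x, a}ᶜ : Set V) with hs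
  -- a (j)-coloring of G - x - a
  have hχ : (G.induce s).chromaticNumber ≤ (j : ℕ∞) := by
    have h2' : (G.induce s).chromaticNumber + 2 ≤ (j : ℕ∞) + 2 := by
      refine le_trans h2 ?_
      push_cast
      exact le_of_eq (by ring)
    exact (ENat.add_le_add_iff_right (by simp)).mp h2'
  obtain ⟨C⟩ : (G.induce s).Colorable j := chromaticNumber_le_iff_colorable.mp hχ
  have hmem : ∀ v, v ≠ x → v ≠ a → v ∈ s := by
    intro v h1 h2
    simp [hs, h1, h2]
  have hys : y ∈ s := hmem y hxy'.symm (Ne.symm hane_y)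
  -- extend to a map on all of V, with a fresh color `Fin.last j`
  set D : V → Fin (j + 1) := fun v => if h : v ∈ s then (C ⟨v, h⟩).castSucc else Fin.last j
    with hD
  have hDs : ∀ v (h : v ∈ s), D v = (C ⟨v, h⟩).castSucc := by
    intro v h
    simp only [hD]
    rw [dif_pos h]
  have hDlast : ∀ v, v ∈ s → D v ≠ Fin.last j := by
    intro v h
    rw [hDs v h]
    exact (Fin.castSucc_lt_last _).ne
  have hDadj : ∀ u v, u ∈ s → v ∈ s → G.Adj u v → D u ≠ D v := by
    intro u v hu hv huv
    rw [hDs u hu, hDs v hv]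
    intro hEq
    exact C.valid (by simpa using huv : (G.induce s).Adj ⟨u, hu⟩ ⟨v, hv⟩)
      (Fin.castSucc_injective _ hEq)
  -- the new coloring of G with j+1 colors
  set f : V → Fin (j + 1) := fun v =>
      if v = x then Fin.last j
      else if v = a then D y
      else if G.Adj a v ∧ D v = D y then Fin.last j
      else D v
    with hf
  have hfx : f x = Fin.last j := by simp [hf]
  have hfa : f a = D y := by simp [hf, hxa'.symm]
  have hfv : ∀ v, v ≠ x → v ≠ a → ¬(G.Adj a v ∧ D v = D y) → f v = D v := by
    intro v h1 h2 h3
    simp only [hf]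
    rw [if_neg h1, if_neg h2, if_neg h3]
  have hfv' : ∀ v, v ≠ x → v ≠ a → G.Adj a v → D v = D y → f v = Fin.last j := by
    intro v h1 h2 h3 h4
    simp only [hf]
    rw [if_neg h1, if_neg h2, if_pos ⟨h3, h4⟩]
  -- a vertex adjacent to x cannot be a "conflict" vertex
  have hcond : ∀ v, G.Adj x v → v ≠ a → ¬(G.Adj a v ∧ D v = D y) := by
    rintro v hxv hva ⟨hav, hDv⟩
    have hvy : v ≠ y := by
      rintro rfl
      exact hay hav.symm
    have hyv : G.Adj y v := by
      by_contra hyv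
      exact hiso v hxv hyv hvy hav
    exact hDadj v y (hmem v hxv.ne' hva) hys hyv.symm hDv
  have hproper : ∀ u v, G.Adj u v → f u ≠ f v := by
    intro u v huv
    by_cases hux : u = x
    · rw [hux] at huv ⊢
      by_cases hva : v = a
      · rw [hva]
        rw [hfx, hfa]
        exact (hDlast y hys).symm
      · have hvx : v ≠ x := huv.ne'
        rw [hfx, hfv v hvx hva (hcond v huv hva)]
        exact (hDlast v (hmem v hvx hva)).symm
    · by_cases hua : u = a
      · rw [hua] at huv ⊢
        by_cases hvx : v = x
        · rw [hvx]
          rw [hfa, hfx]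
          exact hDlast y hys
        · have hva' : v ≠ a := huv.ne'
          by_cases hDv : D v = D y
          · rw [hfa, hfv' v hvx hva' huv hDv]
            exact hDlast y hys
          · rw [hfa, hfv v hvx hva' (fun hc => hDv hc.2)]
            exact fun h => hDv h.symm
      · have hus : u ∈ s := hmem u hux hua
        by_cases hvx : v = x
        · rw [hvx] at huv ⊢
          rw [hfv u hux hua (hcond u huv.symm hua), hfx]
          exact hDlast u hus
        · by_cases hva : v = a
          · rw [hva] at huv ⊢
            by_cases hDu : D u = D y
            · rw [hfv' u hux hua huv.symm hDu, hfa]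
              exact (hDlast y hys).symm
            · rw [hfv u hux hua (fun hc => hDu hc.2), hfa]
              exact hDu
          · have hvs : v ∈ s := hmem v hvx hva
            by_cases hcu : G.Adj a u ∧ D u = D y
            · by_cases hcv : G.Adj a v ∧ D v = D y
              · exact absurd (hcu.2.trans hcv.2.symm) (hDadj u v hus hvs huv)
              · rw [hfv' u hux hua hcu.1 hcu.2, hfv v hvx hva hcv]
                exact (hDlast v hvs).symm
            · by_cases hcv : G.Adj a v ∧ D v = D y
              · rw [hfv u hux hua hcu, hfv' v hvx hva hcv.1 hcv.2]
                exact hDlast u hus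
              · rw [hfv u hux hua hcu, hfv v hvx hva hcv]
                exact hDadj u v hus hvs huv
  -- contradiction: G would be (j+1)-colorable
  have hcolG : G.Colorable (j + 1) := ⟨Coloring.mk f (fun {u v} h => hproper u v h)⟩
  have hle := hcolG.chromaticNumber_le
  rw [hchrom] at hle
  have : (j + 2 : ℕ) ≤ (j + 1 : ℕ) := by exact_mod_cast hle
  omega
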